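/- Let q ∈ ℂ \ {0} with |q| ≠ 1, and let f_1, ..., f_m be polynomials over ℂ. The q-Casorati determinant W_q(f_1,...,f_m) vanishes identically if and only if f_1, ..., f_m are linearly dependent over ℂ (equivalently, over the field of q-periodic functions π with π(qz) = π(z), which for polynomial entries reduces to constants). -/

import Mathlib

open Polynomial

noncomputable section

/-- q-number [n]_q = 1 + q + ... + q^{n-1}. -/
def qNum (q : ℂ) (n : ℕ) : ℂ := ∑ i ∈ Finset.range n, q ^ i

/-- q-factorial. -/
def qFact (q : ℂ) (n : ℕ) : ℂ := ∏ i ∈ Finset.range n, qNum q (i + 1)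

/-- q-binomial coefficient. -/
def qBinom (q : ℂ) (k j : ℕ) : ℂ := qFact q k / (qFact q j * qFact q (k - j))

/-- q-derivative of a function. -/
def Dqf (q : ℂ) (f : ℂ → ℂ) : ℂ → ℂ := fun z => (f (q * z) - f z) / (q * z - z)

/-- q-analogue of the power (z-w)^n : [z-w]_q^n = (z-w)(z-qw)...(z-q^{n-1}w). -/
def qPow (q w : ℂ) (n : ℕ) : Polynomial ℂ := ∏ i ∈ Finset.range n, (X - C (q ^ i * w))

/-- q-derivative as a polynomial operation. -/
def qDeriv (q : ℂ) (f : Polynomial ℂ) : Polynomial ℂ :=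
  C (q - 1)⁻¹ * ((f.comp (C q * X) - f) /ₘ X)

/-- `w` is a zero of `f` with q-weight `n`. -/
def IsZeroQWeight (q : ℂ) (f : Polynomial ℂ) (w : ℂ) (n : ℕ) : Prop :=
  (w = 0 ∧ f ≠ 0 ∧ Polynomial.rootMultiplicity 0 f = n) ∨
  (w ≠ 0 ∧ (∀ k < n, f.eval (q ^ k * w) = 0) ∧ f.eval (q ^ n * w) ≠ 0)

/-- Canonical q-chain factorization of a polynomial. -/
structure QFactorization (q : ℂ) (P : Polynomial ℂ) where
  N : ℕ
  z : Fin N → ℂ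
  n : Fin N → ℕ
  A : ℂ
  A_ne : A ≠ 0
  n_pos : ∀ j, 1 ≤ n j
  eq : P = Polynomial.C A * ∏ j, qPow q (z j) (n j)
  deg_sum : ∑ j, n j = P.natDegree
  chain : ∀ j : Fin N,
    IsZeroQWeight q (∏ k ∈ Finset.univ.filter (fun k => j ≤ k), qPow q (z k) (n k)) (z j) (n j)
  maximal : ∀ j : Fin N, z j ≠ 0 →
    (∏ k ∈ Finset.univ.filter (fun k => j ≤ k), qPow q (z k) (n k)).eval (q⁻¹ * z j) ≠ 0

/-- q-difference radical associated to a canonical factorization. -/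
def radQ {q : ℂ} {P : Polynomial ℂ} (F : QFactorization q P) : Polynomial ℂ :=
  ∏ j, (X - C (F.z j))

local instance : DecidableEq (Polynomial ℂ) := Classical.decEq _

/-- Truncated q-radical of level μ. -/
def radTruncQ {q : ℂ} {P : Polynomial ℂ} (F : QFactorization q P) (μ : ℕ) : Polynomial ℂ :=
  EuclideanDomain.gcd (∏ j, qPow q (F.z j) (F.n j)) (∏ j, qPow q (F.z j) μ)

/-- f and g have a nonconstant common q-divisor. -/
def HasCommonQDivisor (q : ℂ) (f g : Polynomial ℂ) : Prop :=
  ∃ (z₀ z₁ z₂ : ℂ) (m n : ℕ) (F G : Polynomial ℂ), 1 ≤ m ∧ 1 ≤ n ∧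
    f = qPow q z₁ m * F ∧ g = qPow q z₂ n * G ∧ (z₀ = z₁ ∨ z₀ = z₂) ∧
    f * g = qPow q z₀ (m + n) * (F * G)

/-- q-shifted power [P]_q^n(z) = P(z)P(qz)...(P(q^{n-1}z)). -/
def qShiftPow (q : ℂ) (P : Polynomial ℂ) (n : ℕ) : Polynomial ℂ :=
  ∏ i ∈ Finset.range n, P.comp (C (q ^ i) * X)

/-- gcd of a list of polynomials. -/
def gcdList (l : List (Polynomial ℂ)) : Polynomial ℂ := l.foldr EuclideanDomain.gcd 0

def aCoef (q : ℂ) : ℕ → ℕ → ℂ → ℂ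
  | 0, k => fun _ => if k = 0 then 1 else 0
  | i+1, k => fun z =>
      ((if k = 0 then 0 else aCoef q i (k-1) (q*z)) - aCoef q i k z) / (q*z - z)

lemma aCoef_eq_zero (q : ℂ) : ∀ i k, i < k → ∀ z, aCoef q i k z = 0 := by
  intro i
  induction i with
  | zero =>
    intro k hk z
    have hk0 : k ≠ 0 := by omega
    simp [aCoef, hk0]
  | succ i ih =>
    intro k hk z
    have hk0 : k ≠ 0 := by omega
    simp only [aCoef, if_neg hk0, ih (k-1) (by omega), ih k (by omega), sub_zero, zero_div, sub_self]

lemma Dqf_iterate_eq (q : ℂ) (g : ℂ → ℂ) :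
    ∀ i z, (Dqf q)^[i] g z = ∑ k ∈ Finset.range (i+1), aCoef q i k z * g (q^k * z) := by
  intro i
  induction i with
  | zero => intro z; simp [aCoef]
  | succ i ih =>
    intro z
    rw [Function.iterate_succ_apply']
    have h1 : Dqf q ((Dqf q)^[i] g) z
        = ((Dqf q)^[i] g (q*z) - (Dqf q)^[i] g z) / (q*z - z) := rfl
    rw [h1, ih, ih]
    have h2 : ∑ k ∈ Finset.range (i+1), aCoef q i k (q*z) * g (q^k * (q*z))
        = ∑ k ∈ Finset.range (i+2), (if k = 0 then 0 else aCoef q i (k-1) (q*z)) * g (q^k * z) := by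
      rw [Finset.sum_range_succ' (fun k => (if k = 0 then 0 else aCoef q i (k-1) (q*z)) * g (q^k * z)) (i+1)]
      simp only [Nat.succ_ne_zero, ite_false, Nat.add_sub_cancel, ite_true, zero_mul, add_zero]
      refine Finset.sum_congr rfl fun k _ => ?_
      congr 1
      ring_nf
    rw [h2]
    rw [show ∑ k ∈ Finset.range (i+1), aCoef q i k z * g (q^k * z)
        = ∑ k ∈ Finset.range (i+2), aCoef q i k z * g (q^k * z) by
      rw [Finset.sum_range_succ _ (i+1), aCoef_eq_zero q i (i+1) (by omega), zero_mul, add_zero]]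
    rw [← Finset.sum_sub_distrib, Finset.sum_div]
    refine Finset.sum_congr rfl fun k _ => ?_
    simp only [aCoef]
    ring

lemma aCoef_diag_ne_zero (q : ℂ) (hq0 : q ≠ 0) (hq1 : q ≠ 1) :
    ∀ i z, z ≠ 0 → aCoef q i i z ≠ 0 := by
  intro i
  induction i with
  | zero => intro z _; simp [aCoef]
  | succ i ih =>
    intro z hz
    have hqz : q * z ≠ 0 := mul_ne_zero hq0 hz
    have hd : q * z - z ≠ 0 := by
      have : q * z - z = (q - 1) * z := by ring
      rw [this]
      exact mul_ne_zero (sub_ne_zero.mpr hq1) hz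
    simp only [aCoef, Nat.succ_ne_zero, ite_false, Nat.add_sub_cancel,
      aCoef_eq_zero q i (i+1) (by omega), sub_zero]
    exact div_ne_zero (ih (q*z) hqz) hd

/-- polynomial Casorati determinant -/
def Wdet (q : ℂ) (m : ℕ) (f : Fin m → Polynomial ℂ) : Polynomial ℂ :=
  (Matrix.of fun i j : Fin m => ((f j).comp (C (q^(i:ℕ)) * X))).det

lemma Wdet_eval (q : ℂ) (m : ℕ) (f : Fin m → Polynomial ℂ) (z : ℂ) :
    (Wdet q m f).eval z
      = (Matrix.of fun i j : Fin m => (f j).eval (q^(i:ℕ) * z)).det := by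
  rw [Wdet, ← Polynomial.coe_evalRingHom, RingHom.map_det]
  congr 1
  ext i j
  simp [Matrix.map, eval_comp]

lemma casorati_factor (q : ℂ) (hq0 : q ≠ 0) (hq1 : q ≠ 1) (m : ℕ)
    (f : Fin m → Polynomial ℂ) (z : ℂ) (hz : z ≠ 0) :
    Matrix.det (Matrix.of fun i j : Fin m =>
          ((Dqf q)^[(i : ℕ)] (fun w => (f j).eval w)) z)
      = (∏ i : Fin m, aCoef q i i z)
        * (Matrix.of fun i j : Fin m => (f j).eval (q^(i:ℕ) * z)).det := by
  have hfac : (Matrix.of fun i j : Fin m =>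
        ((Dqf q)^[(i : ℕ)] (fun w => (f j).eval w)) z)
      = (Matrix.of fun i k : Fin m => aCoef q i k z)
        * (Matrix.of fun k j : Fin m => (f j).eval (q^(k:ℕ) * z)) := by
    ext i j
    rw [Matrix.mul_apply]
    simp only [Matrix.of_apply]
    rw [Dqf_iterate_eq]
    rw [Fin.sum_univ_eq_sum_range (fun k => aCoef q i k z * (f j).eval (q^k * z)) m]
    have him : (i:ℕ) < m := i.isLt
    apply Finset.sum_subset
    · intro k hk
      simp only [Finset.mem_range] at *
      omega
    · intro k _ hk
      simp only [Finset.mem_range, not_lt] at hk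
      rw [aCoef_eq_zero q i k (by omega), zero_mul]
  rw [hfac, Matrix.det_mul]
  have hlt : (Matrix.of fun i k : Fin m => aCoef q (i:ℕ) (k:ℕ) z).BlockTriangular OrderDual.toDual := by
    intro i k hik
    have h2 : (i:ℕ) < (k:ℕ) := by
      have h3 : (i : Fin m) < k := hik
      exact_mod_cast h3
    exact aCoef_eq_zero q i k h2 z
  rw [Matrix.det_of_lowerTriangular _ hlt]
  rfl

lemma qpow_nat_injective (q : ℂ) (hq0 : q ≠ 0) (habs : ‖q‖ ≠ 1) :
    Function.Injective fun n : ℕ => q ^ n := by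
  intro a b hab
  have h0 : 0 < ‖q‖ := norm_pos_iff.mpr hq0
  have h : ‖q‖ ^ a = ‖q‖ ^ b := by
    simpa [norm_pow] using congrArg norm hab
  exact pow_right_injective₀ h0 habs h

lemma Wdet_ne_zero_of_inj_deg (q : ℂ) (hq0 : q ≠ 0) (habs : ‖q‖ ≠ 1)
    (m : ℕ) (f : Fin m → Polynomial ℂ) (hne : ∀ j, f j ≠ 0)
    (hinj : Function.Injective fun j => (f j).natDegree) :
    Wdet q m f ≠ 0 := by
  set d : Fin m → ℕ := fun j => (f j).natDegree with hd
  set D : ℕ := ∑ j, d j with hD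
  set P : Matrix (Fin m) (Fin m) (Polynomial ℂ) :=
    Matrix.of (fun i j : Fin m => ((f j).comp (C (q^(i:ℕ)) * X))) with hP
  have hdegP : ∀ i j : Fin m, (P i j).natDegree = d j := by
    intro i j
    show ((f j).comp (C (q^(i:ℕ)) * X)).natDegree = d j
    rw [natDegree_comp, natDegree_C_mul_X _ (pow_ne_zero _ hq0), mul_one]
  have hlcP : ∀ i j : Fin m, (P i j).leadingCoeff
      = (f j).leadingCoeff * (q^(d j))^(i:ℕ) := by
    intro i j
    show ((f j).comp (C (q^(i:ℕ)) * X)).leadingCoeff = _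
    rw [leadingCoeff_comp (by rw [natDegree_C_mul_X _ (pow_ne_zero _ hq0)]; exact one_ne_zero),
      leadingCoeff_C_mul_X]
    rw [← pow_mul, ← pow_mul, mul_comm (i:ℕ) ((f j).natDegree)]
  have hPne : ∀ i j : Fin m, P i j ≠ 0 := by
    intro i j
    rw [← leadingCoeff_ne_zero, hlcP]
    exact mul_ne_zero (leadingCoeff_ne_zero.mpr (hne j))
      (pow_ne_zero _ (pow_ne_zero _ hq0))
  have hcoeff : (Wdet q m f).coeff D =
      (∏ j, (f j).leadingCoeff)
        * ((Matrix.vandermonde (fun j : Fin m => q^(d j))).transpose).det := by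
    have hW : Wdet q m f = P.det := rfl
    rw [hW, Matrix.det_apply', Matrix.det_apply']
    rw [finset_sum_coeff]
    rw [Finset.mul_sum]
    refine Finset.sum_congr rfl fun σ _ => ?_
    have h1 : (∏ i, P (σ i) i).natDegree = D := by
      rw [natDegree_prod _ _ (fun i _ => hPne (σ i) i), hD]
      exact Finset.sum_congr rfl fun i _ => hdegP (σ i) i
    have h2 : (∏ i, P (σ i) i).coeff D
        = (∏ j, (f j).leadingCoeff) * ∏ i, (q ^ d i)^((σ i : ℕ)) := by
      rw [← h1, coeff_natDegree, leadingCoeff_prod,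
        Finset.prod_congr rfl (fun i _ => hlcP (σ i) i), Finset.prod_mul_distrib]
    have h3 : ((Equiv.Perm.sign σ : ℤ) : Polynomial ℂ) = C (((Equiv.Perm.sign σ : ℤ) : ℂ)) := by
      push_cast
      rfl
    rw [h3, coeff_C_mul, h2]
    have h4 : ∀ i : Fin m, (Matrix.vandermonde (fun j : Fin m => q^(d j))).transpose (σ i) i
        = (q ^ d i)^((σ i : ℕ)) := fun i => rfl
    rw [Finset.prod_congr rfl (fun i _ => h4 i)]
    ring
  have hvne : ((Matrix.vandermonde (fun j : Fin m => q^(d j))).transpose).det ≠ 0 := by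
    rw [Matrix.det_transpose, Matrix.det_vandermonde]
    refine Finset.prod_ne_zero_iff.mpr fun i _ => Finset.prod_ne_zero_iff.mpr fun j hj => ?_
    rw [Finset.mem_Ioi] at hj
    refine sub_ne_zero.mpr fun hEq => ?_
    have hdij : d j = d i := qpow_nat_injective q hq0 habs hEq
    exact absurd (hinj hdij) (ne_of_gt hj)
  intro h0
  rw [h0, coeff_zero] at hcoeff
  exact (mul_ne_zero (Finset.prod_ne_zero_iff.mpr fun j _ => leadingCoeff_ne_zero.mpr (hne j))
    hvne) hcoeff.symm

lemma sum_pair_smul {M : Type*} [AddCommGroup M] [Module ℂ M] {m : ℕ} {j j' : Fin m}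
    (hjj' : j ≠ j') (a b : ℂ) (f : Fin m → M) :
    ∑ k, (if k = j then a else if k = j' then b else 0) • f k = a • f j + b • f j' := by
  have h : ∀ k, (if k = j then a else if k = j' then b else 0) • f k
      = (if k = j then a • f j else 0) + (if k = j' then b • f j' else 0) := by
    intro k
    by_cases h1 : k = j
    · subst h1; rw [if_pos rfl, if_pos rfl, if_neg hjj', add_zero]
    · by_cases h2 : k = j'
      · subst h2; rw [if_neg h1, if_neg h1, if_pos rfl, if_pos rfl, zero_add]
      · simp [h1, h2]
  rw [Finset.sum_congr rfl fun k _ => h k, Finset.sum_add_distrib,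
    Finset.sum_ite_eq' Finset.univ j fun _ => a • f j,
    Finset.sum_ite_eq' Finset.univ j' fun _ => b • f j']
  simp

lemma sum_smul_update {M : Type*} [AddCommGroup M] [Module ℂ M] {m : ℕ} (j : Fin m)
    (f : Fin m → M) (v : M) (d : Fin m → ℂ) :
    ∑ k, d k • (Function.update f j v) k = (∑ k, d k • f k) + d j • (v - f j) := by
  have h : ∀ k, d k • (Function.update f j v) k
      = d k • f k + (if k = j then d j • (v - f j) else 0) := by
    intro k
    by_cases hk : k = j
    · subst hk; simp [smul_sub]
    · simp [Function.update_of_ne hk, hk]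
  rw [Finset.sum_congr rfl fun k _ => h k, Finset.sum_add_distrib,
    Finset.sum_ite_eq' Finset.univ j fun _ => d j • (v - f j)]
  simp

lemma sum_update_smul {M : Type*} [AddCommGroup M] [Module ℂ M] {m : ℕ} (j : Fin m)
    (f : Fin m → M) (c : ℂ) (d : Fin m → ℂ) :
    ∑ k, (Function.update d j c) k • f k = (∑ k, d k • f k) + (c - d j) • f j := by
  have h : ∀ k, (Function.update d j c) k • f k
      = d k • f k + (if k = j then (c - d j) • f j else 0) := by
    intro k
    by_cases hk : k = j
    · subst hk; simp [sub_smul]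
    · simp [Function.update_of_ne hk, hk]
  rw [Finset.sum_congr rfl fun k _ => h k, Finset.sum_add_distrib,
    Finset.sum_ite_eq' Finset.univ j fun _ => (c - d j) • f j]
  simp

lemma Wdet_ne_zero_of_linearIndependent (q : ℂ) (hq0 : q ≠ 0) (habs : ‖q‖ ≠ 1)
    (m : ℕ) :
    ∀ (n : ℕ) (f : Fin m → Polynomial ℂ), (∑ j, (f j).natDegree) = n →
      LinearIndependent ℂ f → Wdet q m f ≠ 0 := by
  intro n
  induction n using Nat.strong_induction_on with
  | _ n IH =>
    intro f hdeg hind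
    have hne : ∀ j, f j ≠ 0 := fun j => hind.ne_zero j
    by_cases hinj : Function.Injective fun j => (f j).natDegree
    · exact Wdet_ne_zero_of_inj_deg q hq0 habs m f hne hinj
    · rw [Function.not_injective_iff] at hinj
      obtain ⟨j, j', hdd, hjj'⟩ := hinj
      set c : ℂ := (f j).leadingCoeff / (f j').leadingCoeff with hc
      have hlc' : (f j').leadingCoeff ≠ 0 := leadingCoeff_ne_zero.mpr (hne j')
      have hlc : (f j).leadingCoeff ≠ 0 := leadingCoeff_ne_zero.mpr (hne j)
      have hcne : c ≠ 0 := div_ne_zero hlc hlc'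
      set v : Polynomial ℂ := f j - c • f j' with hv
      set g : Fin m → Polynomial ℂ := Function.update f j v with hg
      -- v ≠ 0
      have hvne : v ≠ 0 := by
        intro h0
        have hsum : ∑ k, (if k = j then (1:ℂ) else if k = j' then -c else 0) • f k = 0 := by
          rw [sum_pair_smul hjj' 1 (-c) f, one_smul, neg_smul, ← sub_eq_add_neg, ← hv, h0]
        have h1 := Fintype.linearIndependent_iff.mp hind _ hsum j
        simp at h1
      -- degree drop
      have hdlt : v.natDegree < (f j).natDegree := by
        apply natDegree_lt_natDegree hvne
        have h1 : c • f j' = C c * f j' := smul_eq_C_mul c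
        have h2 : (c • f j').degree = (f j).degree := by
          rw [h1, degree_C_mul hcne, degree_eq_natDegree (hne j'),
            degree_eq_natDegree (hne j), hdd]
        apply degree_sub_lt h2.symm (hne j)
        rw [h1, leadingCoeff_mul, leadingCoeff_C, hc, div_mul_cancel₀ _ hlc']
      -- independence of g
      have hgind : LinearIndependent ℂ g := by
        rw [Fintype.linearIndependent_iff]
        intro d hdsum
        have h1 : ∑ k, d k • g k = (∑ k, d k • f k) + (-(d j * c)) • f j' := by
          rw [hg, sum_smul_update j f v d, hv]
          congr 1
          rw [neg_smul, mul_smul]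
          rw [show f j - c • f j' - f j = -(c • f j') by ring]
          rw [smul_neg]
        set e : Fin m → ℂ := Function.update d j' (d j' - d j * c) with he
        have h2 : ∑ k, e k • f k = (∑ k, d k • f k) + (-(d j * c)) • f j' := by
          rw [he, sum_update_smul j' f (d j' - d j * c) d]
          congr 2
          ring
        have h3 := Fintype.linearIndependent_iff.mp hind e (by rw [h2, ← h1, hdsum])
        have hdj : d j = 0 := by
          have := h3 j
          rwa [he, Function.update_of_ne hjj'] at this
        intro k
        by_cases hk : k = j'
        · subst hk
          have := h3 k
          rw [he, Function.update_self] at this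
          rw [hdj] at this
          simpa using this
        · have := h3 k
          rwa [he, Function.update_of_ne hk] at this
      -- degree sum decreases
      have hdegsum : (∑ k, (g k).natDegree) < n := by
        have h1 : (fun k => (g k).natDegree)
            = Function.update (fun k => (f k).natDegree) j v.natDegree := by
          funext k
          rw [hg]
          exact Function.apply_update (fun _ p => Polynomial.natDegree p) f j v k
        calc ∑ k, (g k).natDegree = ∑ k, Function.update (fun k => (f k).natDegree) j v.natDegree k := by
              rw [h1]
          _ = v.natDegree + ∑ k ∈ Finset.univ \ {j}, (f k).natDegree := by
              rw [Finset.sum_update_of_mem (Finset.mem_univ j)]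
          _ < (f j).natDegree + ∑ k ∈ Finset.univ \ {j}, (f k).natDegree := by
              exact Nat.add_lt_add_right hdlt _
          _ = n := by
              rw [← hdeg, Finset.sum_eq_add_sum_sdiff_singleton_of_mem (Finset.mem_univ j)]
      -- determinant equality
      have hWeq : Wdet q m g = Wdet q m f := by
        set A : Matrix (Fin m) (Fin m) (Polynomial ℂ) :=
          Matrix.of (fun i k : Fin m => ((f k).comp (C (q^(i:ℕ)) * X))) with hA
        have h1 : (Matrix.of fun i k : Fin m => ((g k).comp (C (q^(i:ℕ)) * X)))
            = A.updateCol j (fun i => A i j + (-(C c)) • A i j') := by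
          apply Matrix.ext
          intro i k
          by_cases hk : k = j
          · subst hk
            rw [Matrix.updateCol_self]
            show (g k).comp _ = _
            rw [hg, Function.update_self, hv, sub_comp, smul_comp, smul_eq_C_mul]
            show _ - _ = A i k + _
            rw [neg_smul, smul_eq_mul, ← sub_eq_add_neg]
            rfl
          · rw [Matrix.updateCol_ne hk]
            show (g k).comp _ = A i k
            rw [hg, Function.update_of_ne hk]
            rfl
        show (Matrix.of fun i k : Fin m => ((g k).comp (C (q^(i:ℕ)) * X))).det = A.det
        rw [h1]
        exact Matrix.det_updateCol_add_smul_self A hjj' _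
      rw [← hWeq]
      exact IH _ hdegsum g rfl hgind

lemma Dqf_iterate_zero_fun (q : ℂ) : ∀ (i : ℕ) (z : ℂ), (Dqf q)^[i] (fun _ => (0:ℂ)) z = 0 := by
  intro i
  induction i with
  | zero => intro z; rfl
  | succ i ih =>
    intro z
    rw [Function.iterate_succ_apply]
    have h : Dqf q (fun _ => (0:ℂ)) = fun _ => (0:ℂ) := by
      funext w
      simp [Dqf]
    rw [h]
    exact ih z

lemma Dqf_iterate_sum (q : ℂ) (m : ℕ) (c : Fin m → ℂ) :
    ∀ (i : ℕ) (F : Fin m → ℂ → ℂ) (z : ℂ),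
      (Dqf q)^[i] (fun w => ∑ j, c j * F j w) z = ∑ j, c j * (Dqf q)^[i] (F j) z := by
  intro i
  induction i with
  | zero => intro F z; rfl
  | succ i ih =>
    intro F z
    rw [Function.iterate_succ_apply]
    have h : Dqf q (fun w => ∑ j, c j * F j w) = fun w => ∑ j, c j * Dqf q (F j) w := by
      funext w
      simp only [Dqf]
      rw [← Finset.sum_sub_distrib, Finset.sum_div]
      refine Finset.sum_congr rfl fun j _ => ?_
      rw [← mul_sub, mul_div_assoc]
    rw [h, ih (fun j => Dqf q (F j)) z]
    simp only [← Function.iterate_succ_apply, Function.iterate_succ_apply']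

theorem qCasorati_eq_zero_iff' (q : ℂ) (hq0 : q ≠ 0) (habs : ‖q‖ ≠ 1)
    (m : ℕ) (f : Fin m → Polynomial ℂ) :
    (∀ z : ℂ, z ≠ 0 →
        Matrix.det (Matrix.of fun i j : Fin m =>
          ((Dqf q)^[(i : ℕ)] (fun w => (f j).eval w)) z) = 0)
      ↔ ¬ LinearIndependent ℂ f := by
  have hq1 : q ≠ 1 := by
    intro h
    rw [h] at habs
    simp at habs
  constructor
  · intro H hind
    have hWz : ∀ z : ℂ, z ≠ 0 → (Wdet q m f).eval z = 0 := by
      intro z hz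
      have h1 := casorati_factor q hq0 hq1 m f z hz
      rw [H z hz] at h1
      have h2 : (∏ i : Fin m, aCoef q (i:ℕ) (i:ℕ) z) ≠ 0 :=
        Finset.prod_ne_zero_iff.mpr fun i _ => aCoef_diag_ne_zero q hq0 hq1 i z hz
      rw [Wdet_eval]
      rcases mul_eq_zero.mp h1.symm with h | h
      · exact absurd h h2
      · exact h
    have hW0 : Wdet q m f = 0 := by
      have hXW : X * Wdet q m f = 0 := by
        apply Polynomial.funext
        intro r
        by_cases hr : r = 0
        · subst hr; simp
        · simp [hWz r hr]
      rcases mul_eq_zero.mp hXW with h | h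
      · exact absurd h X_ne_zero
      · exact h
    exact Wdet_ne_zero_of_linearIndependent q hq0 habs m _ f rfl hind hW0
  · intro hdep z hz
    obtain ⟨g, hgsum, i0, hgne⟩ := Fintype.not_linearIndependent_iff.mp hdep
    rw [← Matrix.exists_mulVec_eq_zero_iff]
    refine ⟨g, fun h => hgne (congrFun h i0), ?_⟩
    funext i
    rw [Matrix.mulVec]
    show ∑ j, (Matrix.of fun i j : Fin m =>
        ((Dqf q)^[(i : ℕ)] (fun w => (f j).eval w)) z) i j * g j = 0
    have h1 : ∀ j, (Matrix.of fun i j : Fin m =>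
        ((Dqf q)^[(i : ℕ)] (fun w => (f j).eval w)) z) i j * g j
        = g j * (Dqf q)^[(i : ℕ)] (fun w => (f j).eval w) z := fun j => mul_comm _ _
    rw [Finset.sum_congr rfl fun j _ => h1 j]
    rw [← Dqf_iterate_sum q m g (i : ℕ) (fun j w => (f j).eval w) z]
    have h2 : (fun w => ∑ j, g j * (f j).eval w) = fun _ => (0:ℂ) := by
      funext w
      have h3 : ∑ j, g j * (f j).eval w = (∑ j, g j • f j).eval w := by
        rw [eval_finset_sum]
        exact Finset.sum_congr rfl fun j _ => by rw [smul_eq_C_mul, eval_mul, eval_C]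
      rw [h3, hgsum, eval_zero]
    rw [h2, Dqf_iterate_zero_fun]

/-- The q-Casorati determinant of polynomials vanishes iff they are linearly dependent over ℂ. -/
theorem qCasorati_eq_zero_iff (q : ℂ) (hq0 : q ≠ 0) (habs : ‖q‖ ≠ 1)
    (m : ℕ) (f : Fin m → Polynomial ℂ) :
    (∀ z : ℂ, z ≠ 0 →
        Matrix.det (Matrix.of fun i j : Fin m =>
          ((Dqf q)^[(i : ℕ)] (fun w => (f j).eval w)) z) = 0)
      ↔ ¬ LinearIndependent ℂ f := by
  exact qCasorati_eq_zero_iff' q hq0 habs m f
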